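/- The abelian Lie subalgebra H_n spanned by x_1∂_1, ..., x_n∂_n is a Cartan subalgebra of D_n = Der_K(P_n), i.e. H_n is nilpotent and equals its own normalizer in D_n. -/

import Mathlib

open MvPolynomial

section CartanAux

variable {n : ℕ} {K : Type*} [Field K] [CharZero K]

private lemma coeff_pderiv' (i : Fin n) (m : Fin n →₀ ℕ) (f : MvPolynomial (Fin n) K) :
    coeff m (pderiv i f) = ((m i : K) + 1) * coeff (m + Finsupp.single i 1) f := by
  induction f using MvPolynomial.induction_on' with
  | add p q hp hq => simp [hp, hq]; ring
  | monomial s a =>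
    rw [pderiv_monomial, coeff_monomial, coeff_monomial]
    by_cases h : s = m + Finsupp.single i 1
    · subst h
      rw [if_pos (add_tsub_cancel_right m (Finsupp.single i 1)), if_pos rfl]
      have hsi : (m + Finsupp.single i 1 : Fin n →₀ ℕ) i = m i + 1 := by simp
      rw [hsi]; push_cast; ring
    · rw [if_neg h]
      by_cases h2 : s - Finsupp.single i 1 = m
      · rw [if_pos h2]
        have hsi : s i = 0 := by
          by_contra hsi
          have hle : Finsupp.single i 1 ≤ s :=
            Finsupp.single_le_iff.mpr (Nat.one_le_iff_ne_zero.mpr hsi)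
          exact h (((tsub_add_cancel_of_le hle).symm).trans (by rw [h2]))
        rw [hsi]; simp
      · rw [if_neg h2]; ring

private lemma coeff_X_mul_pderiv (k : Fin n) (m : Fin n →₀ ℕ) (f : MvPolynomial (Fin n) K) :
    coeff m (X k * pderiv k f) = (m k : K) * coeff m f := by
  classical
  rw [coeff_X_mul']
  by_cases h : k ∈ m.support
  · rw [if_pos h, coeff_pderiv']
    have hne : m k ≠ 0 := Finsupp.mem_support_iff.mp h
    have hle : Finsupp.single k 1 ≤ m :=
      Finsupp.single_le_iff.mpr (Nat.one_le_iff_ne_zero.mpr hne)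
    rw [tsub_add_cancel_of_le hle]
    congr 1
    have : (m - Finsupp.single k 1 : Fin n →₀ ℕ) k + 1 = m k := by
      rw [Finsupp.tsub_apply, Finsupp.single_eq_same]; omega
    rw [← this]; push_cast; ring
  · rw [if_neg h]
    have : m k = 0 := by simpa [Finsupp.mem_support_iff] using h
    rw [this]; simp

private lemma eigen_of_eqs (k : Fin n) (f : MvPolynomial (Fin n) K) (c : K)
    (h1 : ∀ j, j ≠ k → pderiv j f = 0)
    (h2 : f - X k * pderiv k f = c • X k) :
    ∃ a : K, f = a • X k := by
  classical
  refine ⟨f.coeff (Finsupp.single k 1), ?_⟩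
  ext m
  rw [coeff_smul, coeff_X', smul_eq_mul]
  by_cases hm : Finsupp.single k 1 = m
  · rw [if_pos hm, mul_one, hm]
  · rw [if_neg hm, mul_zero]
    by_cases hj : ∃ j, j ≠ k ∧ m j ≠ 0
    · obtain ⟨j, hjk, hmj⟩ := hj
      have h0 := congrArg (coeff (m - Finsupp.single j 1)) (h1 j hjk)
      rw [coeff_pderiv', coeff_zero] at h0
      have hle : Finsupp.single j 1 ≤ m :=
        Finsupp.single_le_iff.mpr (Nat.one_le_iff_ne_zero.mpr hmj)
      rw [tsub_add_cancel_of_le hle] at h0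
      rcases mul_eq_zero.mp h0 with h | h
      · exfalso
        have h' : (((m - Finsupp.single j 1 : Fin n →₀ ℕ) j + 1 : ℕ) : K) = 0 := by
          push_cast; exact h
        simpa using Nat.cast_eq_zero.mp h'
      · exact h
    · push_neg at hj
      have hmk : m k ≠ 1 := by
        intro hk1
        apply hm
        ext j
        rcases eq_or_ne j k with rfl | hne
        · rw [Finsupp.single_eq_same, hk1]
        · rw [Finsupp.single_eq_of_ne' (Ne.symm hne), hj j hne]
      have h3 := congrArg (coeff m) h2
      rw [coeff_sub, coeff_X_mul_pderiv, coeff_smul, coeff_X', if_neg hm, smul_zero] at h3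
      have h4 : (1 - (m k : K)) * coeff m f = 0 := by linear_combination h3
      rcases mul_eq_zero.mp h4 with h | h
      · exact absurd (Nat.cast_eq_one.mp (sub_eq_zero.mp h).symm) hmk
      · exact h

private lemma E_apply_X (i j : Fin n) :
    ((X i : MvPolynomial (Fin n) K) • pderiv i) ((X j : MvPolynomial (Fin n) K))
      = if i = j then (X j : MvPolynomial (Fin n) K) else 0 := by
  rcases eq_or_ne i j with rfl | h
  · rw [if_pos rfl, Derivation.smul_apply, pderiv_X_self, smul_eq_mul, mul_one]
  · rw [if_neg h, Derivation.smul_apply, pderiv_X_of_ne h.symm, smul_zero]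

private lemma sum_apply' (s : Finset (Fin n))
    (D : Fin n → Derivation K (MvPolynomial (Fin n) K) (MvPolynomial (Fin n) K))
    (p : MvPolynomial (Fin n) K) :
    (∑ j ∈ s, D j) p = ∑ j ∈ s, D j p := by
  induction s using Finset.cons_induction with
  | empty => simp
  | cons j s hj ih => rw [Finset.sum_cons, Finset.sum_cons, Derivation.add_apply, ih]

private def Hc (n : ℕ) (K : Type*) [Field K] [CharZero K] :
    LieSubalgebra K (Derivation K (MvPolynomial (Fin n) K) (MvPolynomial (Fin n) K)) where
  carrier := {d | ∀ j, ∃ c : K, d (X j) = c • X j}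
  add_mem' := by
    rintro d e hd he j
    obtain ⟨c, hc⟩ := hd j
    obtain ⟨c', hc'⟩ := he j
    exact ⟨c + c', by rw [Derivation.add_apply, hc, hc', add_smul]⟩
  zero_mem' := fun j => ⟨0, by simp⟩
  smul_mem' := by
    rintro t d hd j
    obtain ⟨c, hc⟩ := hd j
    exact ⟨t * c, by rw [Derivation.smul_apply, hc, smul_smul]⟩
  lie_mem' := by
    rintro d e hd he j
    obtain ⟨c, hc⟩ := hd j
    obtain ⟨c', hc'⟩ := he j
    refine ⟨0, ?_⟩
    rw [Derivation.commutator_apply, hc, hc', Derivation.map_smul, Derivation.map_smul, hc, hc',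
      smul_smul, smul_smul, mul_comm, sub_self, zero_smul]

private lemma mem_Hc {d : Derivation K (MvPolynomial (Fin n) K) (MvPolynomial (Fin n) K)} :
    d ∈ Hc n K ↔ ∀ j, ∃ c : K, d (X j) = c • X j := Iff.rfl

private lemma E_mem_Hc (j : Fin n) :
    ((X j : MvPolynomial (Fin n) K) • pderiv j) ∈ Hc n K := by
  intro l
  rcases eq_or_ne j l with rfl | h
  · exact ⟨1, by rw [E_apply_X, if_pos rfl, one_smul]⟩
  · exact ⟨0, by rw [E_apply_X, if_neg h, zero_smul]⟩

private lemma span_eq :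
    LieSubalgebra.lieSpan K (Derivation K (MvPolynomial (Fin n) K) (MvPolynomial (Fin n) K))
      {d | ∃ i : Fin n, d = (X i : MvPolynomial (Fin n) K) • pderiv i} = Hc n K := by
  apply le_antisymm
  · rw [LieSubalgebra.lieSpan_le]
    rintro d ⟨i, rfl⟩
    exact E_mem_Hc i
  · intro d hd
    choose c hc using hd
    have hd' : d = ∑ j : Fin n, c j • ((X j : MvPolynomial (Fin n) K) • pderiv j) := by
      apply derivation_ext
      intro k
      rw [sum_apply', hc k]
      have hterm : ∀ j : Fin n,
          (c j • ((X j : MvPolynomial (Fin n) K) • pderiv j)) ((X k : MvPolynomial (Fin n) K))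
            = if j = k then c k • (X k : MvPolynomial (Fin n) K) else 0 := by
        intro j
        rw [Derivation.smul_apply, E_apply_X]
        rcases eq_or_ne j k with rfl | h
        · rw [if_pos rfl, if_pos rfl]
        · rw [if_neg h, if_neg h, smul_zero]
      simp only [hterm]
      rw [Finset.sum_ite_eq' Finset.univ k (fun _ => c k • X k), if_pos (Finset.mem_univ k)]
    rw [hd']
    exact sum_mem fun j _ => Submodule.smul_mem _ _
      (LieSubalgebra.subset_lieSpan (R := K) ⟨j, rfl⟩)

private lemma abelian_Hc : IsLieAbelian (Hc n K) := by
  constructor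
  intro x y
  have h : (↑⁅x, y⁆ : Derivation K (MvPolynomial (Fin n) K) (MvPolynomial (Fin n) K)) = 0 := by
    rw [LieSubalgebra.coe_bracket]
    apply derivation_ext
    intro j
    obtain ⟨c, hc⟩ := x.2 j
    obtain ⟨c', hc'⟩ := y.2 j
    rw [Derivation.commutator_apply, hc, hc', Derivation.map_smul, Derivation.map_smul, hc, hc',
      smul_smul, smul_smul, mul_comm, sub_self]
    simp
  exact Subtype.ext h

private lemma normalizer_le_Hc : (Hc n K).normalizer ≤ Hc n K := by
  intro d hd
  rw [LieSubalgebra.mem_normalizer_iff] at hd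
  intro k
  have key : ∀ j l : Fin n, ∃ cc : K,
      (if j = l then d (X l) else 0) - X j * pderiv j (d (X l)) = cc • X l := by
    intro j l
    obtain ⟨cc, hcc⟩ := hd _ (E_mem_Hc j) l
    refine ⟨cc, ?_⟩
    rw [Derivation.commutator_apply] at hcc
    rw [← hcc]
    congr 1
    · rw [E_apply_X]
      rcases eq_or_ne j l with rfl | h
      · simp
      · simp [if_neg h]
  have hpd : ∀ j : Fin n, j ≠ k → pderiv j (d (X k)) = 0 := by
    intro j hjk
    obtain ⟨cc, hcc⟩ := key j k
    rw [if_neg hjk, zero_sub] at hcc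
    have h0 := congrArg (aeval (fun t : Fin n =>
      if t = j then (0 : MvPolynomial (Fin n) K) else X t)) hcc
    rw [map_neg, map_mul, map_smul, aeval_X, aeval_X] at h0
    simp only [if_pos rfl, eq_self_iff_true, ite_true, if_neg (Ne.symm hjk), zero_mul,
      neg_zero] at h0
    have hcc0 : cc = 0 := by
      rcases smul_eq_zero.mp h0.symm with h | h
      · exact h
      · exact absurd h (X_ne_zero k)
    rw [hcc0, zero_smul, neg_eq_zero] at hcc
    rcases mul_eq_zero.mp hcc with h | h
    · exact absurd h (X_ne_zero j)
    · exact h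
  obtain ⟨cc, hcc⟩ := key k k
  rw [if_pos rfl] at hcc
  exact eigen_of_eqs k (d (X k)) cc hpd hcc

end CartanAux

/-- The Lie subalgebra H_n of D_n = Der_K(P_n) spanned by x_1∂_1, ..., x_n∂_n is a
Cartan subalgebra: it is nilpotent and equals its own normalizer. -/
theorem cartan_subalgebra (n : ℕ) (K : Type*) [Field K] [CharZero K]
    (H : LieSubalgebra K (Derivation K (MvPolynomial (Fin n) K) (MvPolynomial (Fin n) K)))
    (hH : H = LieSubalgebra.lieSpan K _
      {d | ∃ i : Fin n, d = (X i : MvPolynomial (Fin n) K) • pderiv i}) :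
    LieRing.IsNilpotent H ∧ H.normalizer = H := by
  have hH' : H = Hc n K := by rw [hH, span_eq]
  subst hH'
  refine ⟨?_, le_antisymm normalizer_le_Hc (LieSubalgebra.le_normalizer _)⟩
  haveI := abelian_Hc (n := n) (K := K)
  infer_instance
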